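/- Let T be a tree of height ω₁ and cardinality ℵ₁ with no uncountable chain, and let W be an uncountable collection of pairwise disjoint finite subsets of T. Then there exist distinct s, s′ ∈ W such that every x ∈ s is incomparable in T with every y ∈ s′. -/

import Mathlib

universe u

open Cardinal Ordinal Set Classical

noncomputable def omega1 : Ordinal.{u} := (Cardinal.aleph 1).ord

/-- A tree: a partial order in which the set of strict predecessors of each element
is well-ordered by `<`. -/
def IsTree (T : Type u) [PartialOrder T] : Prop :=
  ∀ x : T, IsWellOrder {y : T // y < x} (fun a b => (a : T) < (b : T))

/-- The height of an element of a tree: the order type of its set of strict predecessors. -/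
noncomputable def treeHeight {T : Type u} [PartialOrder T] (x : T) : Ordinal.{u} :=
  if h : IsWellOrder {y : T // y < x} (fun a b => (a : T) < (b : T)) then
    @Ordinal.type _ _ h else 0

/-- The tree has height `ω₁`: every level below `ω₁` is nonempty and the level `ω₁` is empty
(equivalently, all heights are `< ω₁`). -/
def HasHeightOmega1 (T : Type u) [PartialOrder T] : Prop :=
  (∀ α : Ordinal.{u}, α < omega1.{u} → ∃ x : T, treeHeight x = α) ∧
    ∀ x : T, treeHeight x < omega1.{u}

def NoUncountableChain (T : Type u) [PartialOrder T] : Prop :=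
  ∀ C : Set T, IsChain (· < ·) C → C.Countable

def IsWideAronszajn (T : Type u) [PartialOrder T] : Prop :=
  IsTree T ∧ Cardinal.mk T = Cardinal.aleph.{u} 1 ∧ HasHeightOmega1 T ∧ NoUncountableChain T

def IsAronszajn (T : Type u) [PartialOrder T] : Prop :=
  IsTree T ∧ HasHeightOmega1 T ∧
    (∀ α : Ordinal.{u}, {x : T | treeHeight x = α}.Countable) ∧ NoUncountableChain T

def IsWeakEmbedding {T₁ T₂ : Type u} [PartialOrder T₁] [PartialOrder T₂] (f : T₁ → T₂) : Prop :=
  ∀ x y : T₁, x < y → f x < f y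

/-- Martin's axiom for ℵ₁ many dense sets. -/
def MAomega1 : Prop :=
  ∀ (P : Type u) [PartialOrder P], Nonempty P →
    (∀ A : Set P, (A.Pairwise fun p q => ¬ ∃ r, p ≤ r ∧ q ≤ r) → A.Countable) →
    ∀ 𝒟 : Set (Set P), Cardinal.mk 𝒟 ≤ Cardinal.aleph.{u} 1 →
      (∀ D ∈ 𝒟, ∀ p : P, ∃ q ∈ D, p ≤ q) →
      ∃ G : Set P, (∀ p ∈ G, ∀ q ∈ G, ∃ r ∈ G, p ≤ r ∧ q ≤ r) ∧
        (∀ p ∈ G, ∀ q, q ≤ p → q ∈ G) ∧ ∀ D ∈ 𝒟, (G ∩ D).Nonempty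

/-- A bundled partially ordered type. -/
structure PoType : Type (u + 1) where
  carrier : Type u
  str : PartialOrder carrier

attribute [instance] PoType.str

/-- Baumgartner–Malitz–Reinhardt: in a tree of height and cardinality `ω₁` with no
uncountable chain, any uncountable family of pairwise disjoint finite sets contains two
sets any two elements of which are incomparable. -/
theorem pairwise_disjoint_finite_sets_incomparable {T : Type u} [PartialOrder T]
    (ht : IsTree T) (hht : HasHeightOmega1 T)
    (hcard : Cardinal.mk T = Cardinal.aleph.{u} 1) (hch : NoUncountableChain T)
    (W : Set (Finset T)) (hW : ¬ W.Countable)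
    (hdisj : W.Pairwise fun s s' => ∀ x ∈ s, x ∉ s') :
    ∃ s ∈ W, ∃ s' ∈ W, s ≠ s' ∧ ∀ x ∈ s, ∀ y ∈ s', ¬ x ≤ y ∧ ¬ y ≤ x := by
  classical
  by_contra hcon
  push_neg at hcon
  -- hcon : ∀ s ∈ W, ∀ s' ∈ W, s ≠ s' → ∃ x ∈ s, ∃ y ∈ s', x ≤ y ∨ y ≤ x (roughly)
  -- trichotomy for predecessors
  have tri : ∀ z y y' : T, y < z → y' < z → y = y' ∨ y < y' ∨ y' < y := by
    intro z y y' hy hy'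
    rcases (haveI := ht z; trichotomous (r := fun a b : {y : T // y < z} => (a : T) < (b : T)) ⟨y, hy⟩ ⟨y', hy'⟩) with h | h | h
    · exact Or.inr (Or.inl h)
    · exact Or.inl (congrArg Subtype.val h)
    · exact Or.inr (Or.inr h)
  have predCountable : ∀ z : T, {y : T | y < z}.Countable := by
    intro z
    refine hch _ ?_
    intro y hy y' hy' hne
    rcases tri z y y' hy hy' with h | h | h
    · exact absurd h hne
    · exact Or.inl h
    · exact Or.inr h
  -- an element belongs to at most one member of W
  have unique_mem : ∀ (y : T) (s s' : Finset T), s ∈ W → s' ∈ W → y ∈ s → y ∈ s' → s = s' := by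
    intro y s s' hs hs' hys hys'
    by_contra hne
    exact hdisj hs hs' hne y hys hys'
  -- T is nonempty
  have hTne : Nonempty T := by
    by_contra hempty
    rw [not_nonempty_iff] at hempty
    have h0 : Cardinal.mk T = 0 := Cardinal.mk_eq_zero T
    rw [hcard] at h0
    exact (Cardinal.aleph_pos 1).ne' h0
  -- find n with uncountably many members of cardinality n
  have hn : ∃ n : ℕ, ¬ {s ∈ W | s.card = n}.Countable := by
    by_contra h
    push_neg at h
    apply hW
    have hWeq : W ⊆ ⋃ n : ℕ, {s ∈ W | s.card = n} := by
      intro s hs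
      exact Set.mem_iUnion.2 ⟨s.card, hs, rfl⟩
    exact (Set.countable_iUnion h).mono hWeq
  obtain ⟨n, hW₁⟩ := hn
  set W₁ : Set (Finset T) := {s ∈ W | s.card = n} with hW₁def
  -- enumeration of members of W₁
  set e : Finset T → Fin n → T := fun s j =>
    if h : s.card = n then ((s.equivFinOfCardEq h).symm j : T) else Classical.arbitrary T
    with he
  have he_surj : ∀ (s : Finset T), s.card = n → ∀ y ∈ s, ∃ j : Fin n, e s j = y := by
    intro s hs y hy
    refine ⟨s.equivFinOfCardEq hs ⟨y, hy⟩, ?_⟩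
    simp [he, hs]
  -- the co-countable (rel W₁) filter
  set F : Filter (Finset T) :=
    { sets := {A | (W₁ \ A).Countable}
      univ_sets := by simp
      sets_of_superset := by
        intro A B hA hAB
        exact hA.mono (Set.diff_subset_diff_right hAB)
      inter_sets := by
        intro A B hA hB
        have : W₁ \ (A ∩ B) ⊆ (W₁ \ A) ∪ (W₁ \ B) := by
          intro x hx
          rcases hx with ⟨hx₁, hx₂⟩
          by_cases hxa : x ∈ A
          · exact Or.inr ⟨hx₁, fun hxb => hx₂ ⟨hxa, hxb⟩⟩
          · exact Or.inl ⟨hx₁, hxa⟩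
        exact (hA.union hB).mono this } with hF
  have hFmem : ∀ A : Set (Finset T), (W₁ \ A).Countable → A ∈ F := fun A hA => hA
  have hFne : F.NeBot := by
    constructor
    intro hbot
    have h2 : (∅ : Set (Finset T)) ∈ F := hbot ▸ Filter.mem_bot
    have h3 : (W₁ \ (∅ : Set (Finset T))).Countable := h2
    apply hW₁
    simpa using h3
  set D : Ultrafilter (Finset T) := @Ultrafilter.of _ F hFne with hD
  have hDmem : ∀ A : Set (Finset T), (W₁ \ A).Countable → A ∈ D := by
    intro A hA
    exact (@Ultrafilter.of_le _ F hFne) (hFmem A hA)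
  -- the countable "down-linked" set
  have hCs : ∀ s : Finset T, {s' | s' ∈ W₁ ∧ ∃ y ∈ s', ∃ x ∈ s, y < x}.Countable := by
    intro s
    have hQ : (⋃ x ∈ (s : Set T), {y : T | y < x}).Countable :=
      Set.Countable.biUnion s.countable_toSet (fun x _ => predCountable x)
    have hBig : (⋃ y ∈ (⋃ x ∈ (s : Set T), {y : T | y < x}),
        {s' : Finset T | s' ∈ W₁ ∧ y ∈ s'}).Countable := by
      refine Set.Countable.biUnion hQ (fun y _ => ?_)
      refine Set.Subsingleton.countable ?_
      intro a ha b hb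
      exact unique_mem y a b ha.1.1 hb.1.1 ha.2 hb.2
    refine hBig.mono ?_
    rintro s' ⟨hs', y, hys', x, hxs, hyx⟩
    refine Set.mem_biUnion ?_ ⟨hs', hys'⟩
    exact Set.mem_biUnion hxs hyx
  -- n is positive
  have hnpos : 0 < n := by
    rcases Nat.eq_zero_or_pos n with h0 | h
    · exfalso
      apply hW₁
      refine Set.Subsingleton.countable ?_
      intro a ha b hb
      have ha' : a = ∅ := Finset.card_eq_zero.1 (h0 ▸ ha.2)
      have hb' : b = ∅ := Finset.card_eq_zero.1 (h0 ▸ hb.2)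
      rw [ha', hb']
    · exact h
  haveI : Inhabited (Fin n) := ⟨⟨0, hnpos⟩⟩
  -- key: choose x_s and j_s
  have key : ∀ s : Finset T,
      ∃ x, ∃ j : Fin n, s ∈ W₁ → x ∈ s ∧ {s' | s' ∈ W₁ ∧ x < e s' j} ∈ D := by
    intro s
    by_cases hs : s ∈ W₁
    case neg => exact ⟨Classical.arbitrary T, Classical.arbitrary (Fin n), fun h => absurd h hs⟩
    suffices h : ∃ x, x ∈ s ∧ ∃ j : Fin n, {s' | s' ∈ W₁ ∧ x < e s' j} ∈ D by
      obtain ⟨x, hx, j, hj⟩ := h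
      exact ⟨x, j, fun _ => ⟨hx, hj⟩⟩
    by_contra hno
    push_neg at hno
    -- all pieces not in D, so complements in D
    have hcompl : (⋂ x ∈ (s : Set T), ⋂ j : Fin n, {s' | s' ∈ W₁ ∧ x < e s' j}ᶜ) ∈ D := by
      refine (Filter.biInter_mem s.finite_toSet).2 ?_
      intro x hx
      refine Filter.iInter_mem.2 ?_
      intro j
      exact Ultrafilter.compl_mem_iff_notMem.2 (hno x hx j)
    -- the union is co-countable
    have hE : (⋃ x ∈ (s : Set T), ⋃ j : Fin n, {s' | s' ∈ W₁ ∧ x < e s' j}) ∈ D := by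
      apply hDmem
      have hsub : W₁ \ (⋃ x ∈ (s : Set T), ⋃ j : Fin n, {s' | s' ∈ W₁ ∧ x < e s' j}) ⊆
          {s' | s' ∈ W₁ ∧ ∃ y ∈ s', ∃ x ∈ s, y < x} ∪ {s} := by
        rintro s' ⟨hs'W, hs'not⟩
        by_cases hss' : s' = s
        · exact Or.inr (by simp [hss'])
        · -- use hcon to link s and s'
          obtain ⟨x, hxs, y, hys', hxy⟩ := hcon s hs.1 s' hs'W.1 (Ne.symm hss')
          have hxy : x ≤ y ∨ y ≤ x := by
            by_cases hle : x ≤ y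
            · exact Or.inl hle
            · exact Or.inr (hxy hle)
          have hxney : x ≠ y := by
            intro hxeq
            subst hxeq
            exact (hdisj hs.1 hs'W.1 (Ne.symm hss') x hxs) hys'
          rcases hxy with hle | hle
          · -- up link : x < y, contradiction with hs'not
            exfalso
            apply hs'not
            have hxlty : x < y := lt_of_le_of_ne hle hxney
            obtain ⟨j, hj⟩ := he_surj s' hs'W.2 y hys'
            refine Set.mem_biUnion hxs ?_
            refine Set.mem_iUnion.2 ⟨j, ?_⟩
            exact ⟨hs'W, hj ▸ hxlty⟩
          · -- down link
            have hyltx : y < x := lt_of_le_of_ne hle (Ne.symm hxney)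
            exact Or.inl ⟨hs'W, y, hys', x, hxs, hyltx⟩
      exact ((hCs s).union (Set.countable_singleton s)).mono hsub
    obtain ⟨ρ, hρ₁, hρ₂⟩ := Ultrafilter.nonempty_of_mem (Filter.inter_mem hE hcompl)
    simp only [Set.mem_iUnion, Set.mem_iInter] at hρ₁ hρ₂
    obtain ⟨x, hx, j, hj⟩ := hρ₁
    exact hρ₂ x hx j hj
  choose xF jF hkey using key
  have hxFmem : ∀ s, s ∈ W₁ → xF s ∈ s := fun s hs => (hkey s hs).1
  have hjF : ∀ s, s ∈ W₁ → {s' | s' ∈ W₁ ∧ xF s < e s' (jF s)} ∈ D :=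
    fun s hs => (hkey s hs).2
  -- pigeonhole on jF
  have hjstar : ∃ j : Fin n, ¬ {s ∈ W₁ | jF s = j}.Countable := by
    by_contra h
    push_neg at h
    apply hW₁
    have : W₁ ⊆ ⋃ j : Fin n, {s ∈ W₁ | jF s = j} := by
      intro s hs
      exact Set.mem_iUnion.2 ⟨jF s, hs, rfl⟩
    exact (Set.countable_iUnion h).mono this
  obtain ⟨j₀, hI⟩ := hjstar
  set I : Set (Finset T) := {s ∈ W₁ | jF s = j₀} with hIdef
  -- {xF s : s ∈ I} is a chain
  have hchain : IsChain (· < ·) ((fun s => xF s) '' I) := by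
    rintro _ ⟨a, ha, rfl⟩ _ ⟨b, hb, rfl⟩ hne
    have hab : a ≠ b := by
      intro h; exact hne (by rw [h])
    have hAa := hjF a ha.1
    have hAb := hjF b hb.1
    obtain ⟨ρ, hρa, hρb⟩ := Ultrafilter.nonempty_of_mem (Filter.inter_mem hAa hAb)
    have h1 : xF a < e ρ j₀ := by
      have := hρa.2; rwa [ha.2] at this
    have h2 : xF b < e ρ j₀ := by
      have := hρb.2; rwa [hb.2] at this
    rcases tri (e ρ j₀) (xF a) (xF b) h1 h2 with h | h | h
    · exact absurd h hne
    · exact Or.inl h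
    · exact Or.inr h
  have hCcount := hch _ hchain
  apply hI
  refine Set.countable_of_injective_of_countable_image ?_ hCcount
  intro a ha b hb hxy
  have hxy' : xF a = xF b := hxy
  exact unique_mem (xF a) a b ha.1.1 hb.1.1 (hxFmem a ha.1) (hxy' ▸ hxFmem b hb.1)
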